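/- The Eulerian polynomials satisfy the recurrence A_n(t) = A_{n−1}(t) + Σ_{k=1}^{n−1} binom(n−1, k−1) A_{k−1}(t) A_{n−k}(t) t for n ≥ 1, where A₀(t) = 1. -/

import Mathlib

open Polynomial

/-- The number of descents of a permutation of `{1,…,r}` (positions `i < r` with
`σ(i) > σ(i+1)`). -/
noncomputable def descentsCount (r : ℕ) (σ : Equiv.Perm (Fin r)) : ℕ :=
  (Finset.univ.filter fun i : Fin r =>
    ∃ h : (i : ℕ) + 1 < r, σ ⟨(i : ℕ) + 1, h⟩ < σ i).card

/-- The Eulerian polynomial `A_r(t) = ∑_{σ ∈ S_r} t^{des σ}`, with `A₀(t) = 1`. -/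
noncomputable def eulerianPoly (r : ℕ) : Polynomial ℤ :=
  ∑ σ : Equiv.Perm (Fin r), X ^ descentsCount r σ

open Finset

/-- Descents of a word `w` of length `l` with values in an ordered type. -/
def desWord {l : ℕ} {α : Type*} [LinearOrder α] (w : Fin l → α) : ℕ :=
  (Finset.univ.filter fun i : Fin l =>
    ∃ h : (i : ℕ) + 1 < l, w ⟨(i : ℕ) + 1, h⟩ < w i).card

lemma exists_iff_of_true {P : Prop} (hP : P) {Q : P → Prop} : (∃ h : P, Q h) ↔ Q hP :=
  ⟨fun ⟨_, q⟩ => q, fun q => ⟨hP, q⟩⟩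

lemma descentsCount_eq_desWord {r : ℕ} (σ : Equiv.Perm (Fin r)) :
    descentsCount r σ = desWord (⇑σ) := by
  unfold descentsCount desWord
  congr

lemma desWord_congr {l : ℕ} {α β : Type*} [LinearOrder α] [LinearOrder β]
    (w : Fin l → α) (w' : Fin l → β)
    (h : ∀ i j : Fin l, w i < w j ↔ w' i < w' j) : desWord w = desWord w' := by
  unfold desWord
  congr 1
  apply Finset.filter_congr
  intro i _
  exact ⟨fun ⟨hb, hlt⟩ => ⟨hb, (h _ _).1 hlt⟩, fun ⟨hb, hlt⟩ => ⟨hb, (h _ _).2 hlt⟩⟩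

lemma desWord_eq_sum {l : ℕ} {α : Type*} [LinearOrder α] (w : Fin l → α) :
    desWord w = ∑ i : Fin l,
      if (∃ h : (i : ℕ) + 1 < l, w ⟨(i : ℕ) + 1, h⟩ < w i) then 1 else 0 := by
  unfold desWord
  rw [Finset.card_filter]

lemma image_orderEmbOfFin_univ {α : Type*} [LinearOrder α] [DecidableEq α] (S : Finset α)
    {k : ℕ} (h : S.card = k) :
    image (fun i => S.orderEmbOfFin h i) univ = S := by
  ext z
  simp only [mem_image, mem_univ, true_and]
  constructor
  · rintro ⟨i, rfl⟩; exact S.orderEmbOfFin_mem h i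
  · intro hz
    refine ⟨(S.orderIsoOfFin h).symm ⟨z, hz⟩, ?_⟩
    show ((S.orderIsoOfFin h) _ : α) = z
    rw [OrderIso.apply_symm_apply]

lemma sum_pairs (a b : ℕ) (S : Finset (Fin (a + b))) (hS : S.card = a) :
    ∑ τ ∈ univ.filter (fun τ : (Fin a ⊕ Fin b) ≃ Fin (a + b) =>
        image (fun x => τ (Sum.inl x)) univ = S),
      (X : Polynomial ℤ) ^
        (desWord (fun x => τ (Sum.inl x)) + desWord (fun y => τ (Sum.inr y)))
      = eulerianPoly a * eulerianPoly b := by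
  have hS' : Sᶜ.card = b := by
    rw [Finset.card_compl, Fintype.card_fin, hS]; omega
  have hinj : Function.Injective
      (Sum.elim (fun x : Fin a => (S.orderEmbOfFin hS x : Fin (a + b)))
        (fun y : Fin b => (Sᶜ.orderEmbOfFin hS' y : Fin (a + b)))) := by
    have hd : ∀ (x : Fin a) (y : Fin b),
        (S.orderEmbOfFin hS x : Fin (a + b)) ≠ Sᶜ.orderEmbOfFin hS' y := by
      intro x y hxy
      have h1 := S.orderEmbOfFin_mem hS x
      have h2 := Sᶜ.orderEmbOfFin_mem hS' y
      rw [hxy] at h1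
      rw [Finset.mem_compl] at h2
      exact h2 h1
    rintro (x | x) (y | y) hxy
    · exact congrArg Sum.inl ((S.orderEmbOfFin hS).injective hxy)
    · exact absurd hxy (hd x y)
    · exact absurd hxy.symm (hd y x)
    · exact congrArg Sum.inr ((Sᶜ.orderEmbOfFin hS').injective hxy)
  let E : (Fin a ⊕ Fin b) ≃ Fin (a + b) :=
    Equiv.ofBijective
      (Sum.elim (fun x : Fin a => (S.orderEmbOfFin hS x : Fin (a + b)))
        (fun y : Fin b => (Sᶜ.orderEmbOfFin hS' y : Fin (a + b))))
      (Fintype.bijective_iff_injective_and_card _ |>.2 ⟨hinj, by simp⟩)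
  have hEl : ∀ x : Fin a, E (Sum.inl x) = S.orderEmbOfFin hS x := fun _ => rfl
  have hEr : ∀ y : Fin b, E (Sum.inr y) = Sᶜ.orderEmbOfFin hS' y := fun _ => rfl
  rw [eulerianPoly, eulerianPoly, Finset.sum_mul_sum, ← Fintype.sum_prod_type']
  refine (Finset.sum_nbij (fun z : Equiv.Perm (Fin a) × Equiv.Perm (Fin b) =>
    (Equiv.sumCongr z.1 z.2).trans E) ?_ ?_ ?_ ?_).symm
  · -- maps to the filter
    intro z _
    rw [Finset.mem_filter]
    refine ⟨mem_univ _, ?_⟩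
    have : (fun x => ((Equiv.sumCongr z.1 z.2).trans E) (Sum.inl x))
        = (fun i => S.orderEmbOfFin hS i) ∘ ⇑z.1 := by
      funext x; simp [Equiv.sumCongr_apply, hEl]
    rw [this, ← Finset.image_image]
    rw [Finset.image_univ_equiv]
    exact _root_.image_orderEmbOfFin_univ S hS
  · -- injective
    intro z _ w _ hzw
    have h1 : z.1 = w.1 := by
      apply Equiv.ext; intro x
      have := congrArg (fun (f : (Fin a ⊕ Fin b) ≃ Fin (a + b)) => f (Sum.inl x)) hzw
      simp only [Equiv.trans_apply, Equiv.sumCongr_apply, Sum.map_inl] at this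
      exact Sum.inl_injective (E.injective this)
    have h2 : z.2 = w.2 := by
      apply Equiv.ext; intro y
      have := congrArg (fun (f : (Fin a ⊕ Fin b) ≃ Fin (a + b)) => f (Sum.inr y)) hzw
      simp only [Equiv.trans_apply, Equiv.sumCongr_apply, Sum.map_inr] at this
      exact Sum.inr_injective (E.injective this)
    exact Prod.ext h1 h2
  · -- surjective
    intro τ hτ
    rw [Finset.mem_coe, Finset.mem_filter] at hτ
    obtain ⟨-, himg⟩ := hτ
    have hmem1 : ∀ x, τ (Sum.inl x) ∈ S := fun x =>
      himg ▸ Finset.mem_image_of_mem _ (mem_univ x)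
    have hmem2 : ∀ y, τ (Sum.inr y) ∈ Sᶜ := by
      intro y
      rw [Finset.mem_compl, ← himg]
      intro hy
      obtain ⟨x, -, hx⟩ := Finset.mem_image.1 hy
      exact Sum.inl_ne_inr (τ.injective hx)
    have hπinj : Function.Injective
        (fun x => (S.orderIsoOfFin hS).symm ⟨τ (Sum.inl x), hmem1 x⟩) := by
      intro u v huv
      simp only at huv
      have h2 := (S.orderIsoOfFin hS).symm.injective huv
      have h3 : τ (Sum.inl u) = τ (Sum.inl v) := congrArg Subtype.val h2
      exact Sum.inl_injective (τ.injective h3)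
    have hρinj : Function.Injective
        (fun y => (Sᶜ.orderIsoOfFin hS').symm ⟨τ (Sum.inr y), hmem2 y⟩) := by
      intro u v huv
      simp only at huv
      have h2 := (Sᶜ.orderIsoOfFin hS').symm.injective huv
      have h3 : τ (Sum.inr u) = τ (Sum.inr v) := congrArg Subtype.val h2
      exact Sum.inr_injective (τ.injective h3)
    refine ⟨(Equiv.ofBijective (fun x => (S.orderIsoOfFin hS).symm ⟨τ (Sum.inl x), hmem1 x⟩)
               (Fintype.bijective_iff_injective_and_card _ |>.2 ⟨hπinj, by simp [hS]⟩),
             Equiv.ofBijective (fun y => (Sᶜ.orderIsoOfFin hS').symm ⟨τ (Sum.inr y), hmem2 y⟩)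
               (Fintype.bijective_iff_injective_and_card _ |>.2 ⟨hρinj, by simp [hS']⟩)), by simp, ?_⟩
    apply Equiv.ext
    rintro (x | y)
    · show E (Sum.inl _) = τ (Sum.inl x)
      rw [hEl]
      show ((S.orderIsoOfFin hS) ((S.orderIsoOfFin hS).symm ⟨τ (Sum.inl x), hmem1 x⟩) : Fin (a+b))
        = τ (Sum.inl x)
      rw [OrderIso.apply_symm_apply]
    · show E (Sum.inr _) = τ (Sum.inr y)
      rw [hEr]
      show ((Sᶜ.orderIsoOfFin hS') ((Sᶜ.orderIsoOfFin hS').symm ⟨τ (Sum.inr y), hmem2 y⟩) : Fin (a+b))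
        = τ (Sum.inr y)
      rw [OrderIso.apply_symm_apply]
  · -- values
    intro z _
    rw [← pow_add]
    congr 1
    have hA : descentsCount a z.1 = desWord
        (fun x => ((Equiv.sumCongr z.1 z.2).trans E) (Sum.inl x)) := by
      rw [descentsCount_eq_desWord]
      apply desWord_congr
      intro i j
      simp only [Equiv.trans_apply, Equiv.sumCongr_apply, Sum.map_inl, hEl]
      exact ((S.orderEmbOfFin hS).lt_iff_lt).symm
    have hB : descentsCount b z.2 = desWord
        (fun y => ((Equiv.sumCongr z.1 z.2).trans E) (Sum.inr y)) := by
      rw [descentsCount_eq_desWord]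
      apply desWord_congr
      intro i j
      simp only [Equiv.trans_apply, Equiv.sumCongr_apply, Sum.map_inr, hEr]
      exact ((Sᶜ.orderEmbOfFin hS').lt_iff_lt).symm
    rw [hA, hB]

lemma sum_equivs (a b : ℕ) :
    ∑ τ : (Fin a ⊕ Fin b) ≃ Fin (a + b),
      (X : Polynomial ℤ) ^
        (desWord (fun x => τ (Sum.inl x)) + desWord (fun y => τ (Sum.inr y)))
    = ((a + b).choose a : Polynomial ℤ) * (eulerianPoly a * eulerianPoly b) := by
  rw [← Finset.sum_fiberwise_of_maps_to
    (g := fun τ : (Fin a ⊕ Fin b) ≃ Fin (a + b) => image (fun x => τ (Sum.inl x)) univ)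
    (t := (univ : Finset (Fin (a + b))).powersetCard a)
    (fun τ _ => Finset.mem_powersetCard.2 ⟨Finset.subset_univ _, by
      show (image (fun x => τ (Sum.inl x)) univ).card = a
      rw [Finset.card_image_of_injective _
          (show Function.Injective (fun x => τ (Sum.inl x)) from
            fun u v huv => Sum.inl_injective (τ.injective huv)),
        Finset.card_univ, Fintype.card_fin]⟩)]
  rw [Finset.sum_congr rfl (fun S hS => sum_pairs a b S (Finset.mem_powersetCard.1 hS).2)]
  rw [Finset.sum_const, Finset.card_powersetCard, Finset.card_univ, Fintype.card_fin,
    nsmul_eq_mul]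

lemma sum_filter_mid (N a c : ℕ) (hN : N = a + c + 2) (p top : Fin N) (hp : (p : ℕ) = a)
    (htop : (top : ℕ) = N - 1) :
    ∑ σ ∈ univ.filter (fun σ : Equiv.Perm (Fin N) => σ p = top),
      (X : Polynomial ℤ) ^ descentsCount N σ
    = ((a + c + 1).choose a : Polynomial ℤ) * (eulerianPoly a * eulerianPoly (c + 1)) * X := by
  subst hN
  have htop' : (top : ℕ) = a + c + 1 := by omega
  let e2 : Fin (a + c + 1) ⊕ Fin 1 ≃ Fin (a + c + 2) := finSumFinEquiv
  let e : Fin a ⊕ (Fin 1 ⊕ Fin (c + 1)) ≃ Fin (a + c + 2) :=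
    ((Equiv.refl (Fin a)).sumCongr finSumFinEquiv).trans
      (finSumFinEquiv.trans (finCongr (by omega)))
  let r1 : Fin a ⊕ (Fin 1 ⊕ Fin (c + 1)) ≃ (Fin a ⊕ Fin (c + 1)) ⊕ Fin 1 :=
    ((Equiv.refl (Fin a)).sumCongr (Equiv.sumComm _ _)).trans (Equiv.sumAssoc _ _ _).symm
  let F : ((Fin a ⊕ Fin (c + 1)) ≃ Fin (a + c + 1)) → Equiv.Perm (Fin (a + c + 2)) :=
    fun τ => e.symm.trans (r1.trans ((τ.sumCongr (Equiv.refl (Fin 1))).trans e2))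
  -- position values
  have he1 : ∀ x : Fin a, ((e (Sum.inl x) : Fin (a + c + 2)) : ℕ) = (x : ℕ) := by
    intro x; simp [e]
  have he2 : ∀ z : Fin 1, ((e (Sum.inr (Sum.inl z)) : Fin (a + c + 2)) : ℕ) = a := by
    intro z; simp [e]
  have he3 : ∀ y : Fin (c + 1),
      ((e (Sum.inr (Sum.inr y)) : Fin (a + c + 2)) : ℕ) = a + 1 + (y : ℕ) := by
    intro y; simp [e]; omega
  -- value values
  have hv2 : ∀ u : Fin (a + c + 1), ((e2 (Sum.inl u) : Fin (a + c + 2)) : ℕ) = (u : ℕ) := by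
    intro u; simp [e2]
  have hv2' : ∀ z : Fin 1, ((e2 (Sum.inr z) : Fin (a + c + 2)) : ℕ) = a + c + 1 := by
    intro z; simp [e2]
  -- evaluation of F
  have hF1 : ∀ τ (x : Fin a), F τ (e (Sum.inl x)) = e2 (Sum.inl (τ (Sum.inl x))) := by
    intro τ x
    simp only [F, Equiv.trans_apply, Equiv.symm_apply_apply]
    rfl
  have hF2 : ∀ τ (z : Fin 1), F τ (e (Sum.inr (Sum.inl z))) = e2 (Sum.inr z) := by
    intro τ z
    simp only [F, Equiv.trans_apply, Equiv.symm_apply_apply]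
    rfl
  have hF3 : ∀ τ (y : Fin (c + 1)),
      F τ (e (Sum.inr (Sum.inr y))) = e2 (Sum.inl (τ (Sum.inr y))) := by
    intro τ y
    simp only [F, Equiv.trans_apply, Equiv.symm_apply_apply]
    rfl
  have hpe : p = e (Sum.inr (Sum.inl 0)) := Fin.ext (by rw [hp, he2])
  -- descents of F τ
  have hdes : ∀ τ, descentsCount (a + c + 2) (F τ)
      = desWord (fun x => τ (Sum.inl x)) + desWord (fun y => τ (Sum.inr y)) + 1 := by
    intro τ
    rw [descentsCount_eq_desWord, desWord_eq_sum]
    rw [← Equiv.sum_comp e (fun i : Fin (a + c + 2) =>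
      if (∃ h : (i : ℕ) + 1 < a + c + 2, (F τ) ⟨(i : ℕ) + 1, h⟩ < (F τ) i) then 1 else 0)]
    rw [Fintype.sum_sum_type, Fintype.sum_sum_type]
    have hT1 : ∑ x : Fin a,
        (if (∃ h : ((e (Sum.inl x) : Fin (a+c+2)) : ℕ) + 1 < a + c + 2,
            (F τ) ⟨_ + 1, h⟩ < (F τ) (e (Sum.inl x))) then 1 else 0)
        = desWord (fun x => τ (Sum.inl x)) := by
      rw [desWord_eq_sum]
      refine Finset.sum_congr rfl fun x _ => ?_
      refine if_congr ?_ rfl rfl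
      have hb : ((e (Sum.inl x) : Fin (a+c+2)) : ℕ) + 1 < a + c + 2 := by
        rw [he1]; have := x.isLt; omega
      rw [exists_iff_of_true hb, hF1]
      rcases lt_or_ge ((x : ℕ) + 1) a with hx | hx
      · have hkey : (⟨((e (Sum.inl x) : Fin (a+c+2)) : ℕ) + 1, hb⟩ : Fin (a + c + 2))
            = e (Sum.inl ⟨(x : ℕ) + 1, hx⟩) := Fin.ext (by simp [he1])
        rw [hkey, hF1]
        rw [show (e2 (Sum.inl (τ (Sum.inl ⟨(x:ℕ)+1, hx⟩))) < e2 (Sum.inl (τ (Sum.inl x))))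
            ↔ (τ (Sum.inl ⟨(x:ℕ)+1, hx⟩) < τ (Sum.inl x)) by
          rw [Fin.lt_def, Fin.lt_def, hv2, hv2]]
        exact (exists_iff_of_true
          (Q := fun h => τ (Sum.inl ⟨(x:ℕ)+1, h⟩) < τ (Sum.inl x)) hx).symm
      · have hxa : (x : ℕ) + 1 = a := by have := x.isLt; omega
        have hkey : (⟨((e (Sum.inl x) : Fin (a+c+2)) : ℕ) + 1, hb⟩ : Fin (a + c + 2))
            = e (Sum.inr (Sum.inl 0)) := Fin.ext (by simp [he1, he2]; omega)
        rw [hkey, hF2]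
        constructor
        · intro h
          rw [Fin.lt_def, hv2, hv2'] at h
          have := (τ (Sum.inl x)).isLt
          omega
        · rintro ⟨h, -⟩; omega
    have hT2 : ∑ z : Fin 1,
        (if (∃ h : ((e (Sum.inr (Sum.inl z)) : Fin (a+c+2)) : ℕ) + 1 < a + c + 2,
            (F τ) ⟨_ + 1, h⟩ < (F τ) (e (Sum.inr (Sum.inl z)))) then 1 else 0) = 1 := by
      rw [Fin.sum_univ_one]
      have hb : ((e (Sum.inr (Sum.inl (0 : Fin 1))) : Fin (a+c+2)) : ℕ) + 1 < a + c + 2 := by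
        rw [he2]; omega
      rw [if_pos]
      refine ⟨hb, ?_⟩
      have hkey : (⟨((e (Sum.inr (Sum.inl (0 : Fin 1))) : Fin (a+c+2)) : ℕ) + 1, hb⟩
          : Fin (a + c + 2)) = e (Sum.inr (Sum.inr 0)) := Fin.ext (by simp [he2, he3])
      rw [hkey, hF3, hF2]
      rw [Fin.lt_def, hv2, hv2']
      exact (τ (Sum.inr 0)).isLt
    have hT3 : ∑ y : Fin (c + 1),
        (if (∃ h : ((e (Sum.inr (Sum.inr y)) : Fin (a+c+2)) : ℕ) + 1 < a + c + 2,
            (F τ) ⟨_ + 1, h⟩ < (F τ) (e (Sum.inr (Sum.inr y)))) then 1 else 0)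
        = desWord (fun y => τ (Sum.inr y)) := by
      rw [desWord_eq_sum]
      refine Finset.sum_congr rfl fun y _ => ?_
      refine if_congr ?_ rfl rfl
      rcases lt_or_ge ((y : ℕ) + 1) (c + 1) with hy | hy
      · have hb : ((e (Sum.inr (Sum.inr y)) : Fin (a+c+2)) : ℕ) + 1 < a + c + 2 := by
          rw [he3]; omega
        rw [exists_iff_of_true hb, hF3]
        have hkey : (⟨((e (Sum.inr (Sum.inr y)) : Fin (a+c+2)) : ℕ) + 1, hb⟩
            : Fin (a + c + 2)) = e (Sum.inr (Sum.inr ⟨(y : ℕ) + 1, hy⟩)) :=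
          Fin.ext (by simp [he3]; omega)
        rw [hkey, hF3]
        rw [show (e2 (Sum.inl (τ (Sum.inr ⟨(y:ℕ)+1, hy⟩))) < e2 (Sum.inl (τ (Sum.inr y))))
            ↔ (τ (Sum.inr ⟨(y:ℕ)+1, hy⟩) < τ (Sum.inr y)) by
          rw [Fin.lt_def, Fin.lt_def, hv2, hv2]]
        exact (exists_iff_of_true
          (Q := fun h => τ (Sum.inr ⟨(y:ℕ)+1, h⟩) < τ (Sum.inr y)) hy).symm
      · have hb : ¬ (((e (Sum.inr (Sum.inr y)) : Fin (a+c+2)) : ℕ) + 1 < a + c + 2) := by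
          rw [he3]; have := y.isLt; omega
        constructor
        · rintro ⟨h, -⟩; exact absurd h hb
        · rintro ⟨h, -⟩; omega
    rw [hT1, hT2, hT3]
    ring
  -- the bijection
  have hstep : ∑ σ ∈ univ.filter (fun σ : Equiv.Perm (Fin (a + c + 2)) => σ p = top),
      (X : Polynomial ℤ) ^ descentsCount (a + c + 2) σ
      = ∑ τ : (Fin a ⊕ Fin (c + 1)) ≃ Fin (a + c + 1), (X : Polynomial ℤ) ^
          (desWord (fun x => τ (Sum.inl x)) + desWord (fun y => τ (Sum.inr y)) + 1) := by
    refine (Finset.sum_nbij F ?_ ?_ ?_ ?_).symm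
    · -- maps to filter
      intro τ _
      rw [Finset.mem_filter]
      refine ⟨mem_univ _, ?_⟩
      rw [hpe, hF2]
      exact Fin.ext (by rw [hv2', htop'])
    · -- injective
      intro τ _ τ' _ hττ'
      apply Equiv.ext
      rintro (x | y)
      · have := congrArg (fun (f : Equiv.Perm (Fin (a + c + 2))) => f (e (Sum.inl x))) hττ'
        rw [hF1, hF1] at this
        exact Sum.inl_injective (e2.injective this)
      · have := congrArg (fun (f : Equiv.Perm (Fin (a + c + 2))) => f (e (Sum.inr (Sum.inr y)))) hττ'
        rw [hF3, hF3] at this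
        exact Sum.inl_injective (e2.injective this)
    · -- surjective
      intro σ hσ
      rw [Finset.mem_coe, Finset.mem_filter] at hσ
      obtain ⟨-, hσp⟩ := hσ
      have hnep : ∀ u : Fin a ⊕ Fin (c + 1), e (r1.symm (Sum.inl u)) ≠ p := by
        rintro (x | y) hcontra <;> apply_fun Fin.val at hcontra
        · rw [show r1.symm (Sum.inl (Sum.inl x)) = Sum.inl x from rfl, he1, hp] at hcontra
          have := x.isLt; omega
        · rw [show r1.symm (Sum.inl (Sum.inr y)) = Sum.inr (Sum.inr y) from rfl, he3, hp]
            at hcontra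
          omega
      have hne : ∀ u : Fin a ⊕ Fin (c + 1),
          σ (e (r1.symm (Sum.inl u))) ≠ Fin.last (a + c + 1) := by
        intro u hcontra
        have htopl : top = Fin.last (a + c + 1) := Fin.ext (by rw [htop']; rfl)
        rw [← htopl, ← hσp] at hcontra
        exact hnep u (σ.injective hcontra)
      have hginj : Function.Injective
          (fun u : Fin a ⊕ Fin (c + 1) =>
            (σ (e (r1.symm (Sum.inl u)))).castPred (hne u)) := by
        intro u v huv
        simp only at huv
        have h1 : σ (e (r1.symm (Sum.inl u))) = σ (e (r1.symm (Sum.inl v))) :=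
          Fin.ext (by
            have := congrArg Fin.val huv
            simpa using this)
        exact Sum.inl_injective (r1.symm.injective (e.injective (σ.injective h1)))
      have hbij := (Fintype.bijective_iff_injective_and_card _).2 ⟨hginj,
        by simp only [Fintype.card_sum, Fintype.card_fin]; omega⟩
      refine ⟨Equiv.ofBijective _ hbij, by simp, ?_⟩
      apply Equiv.ext
      have key : ∀ z, (F (Equiv.ofBijective _ hbij)) (e z) = σ (e z) := by
        rintro (x | z | y)
        · rw [hF1]
          show e2 (Sum.inl ((σ (e (r1.symm (Sum.inl (Sum.inl x))))).castPred (hne (Sum.inl x)))) = σ (e (Sum.inl x))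
          exact Fin.ext (by rw [hv2]; simp [r1])
        · rw [hF2]
          have hz : z = 0 := Subsingleton.elim _ _
          rw [hz]
          have h0 : e (Sum.inr (Sum.inl (0 : Fin 1))) = p := hpe.symm
          rw [h0, hσp]
          exact Fin.ext (by rw [hv2', htop'])
        · rw [hF3]
          show e2 (Sum.inl ((σ (e (r1.symm (Sum.inl (Sum.inr y))))).castPred (hne (Sum.inr y))))
            = σ (e (Sum.inr (Sum.inr y)))
          exact Fin.ext (by rw [hv2]; simp [r1])
      intro i
      have hkey := key (e.symm i)
      rwa [e.apply_symm_apply] at hkey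
    · -- values
      intro τ _
      rw [hdes τ]
  rw [hstep]
  have hrw : ∀ τ : (Fin a ⊕ Fin (c + 1)) ≃ Fin (a + c + 1), (X : Polynomial ℤ) ^
      (desWord (fun x => τ (Sum.inl x)) + desWord (fun y => τ (Sum.inr y)) + 1)
      = (X : Polynomial ℤ) ^
      (desWord (fun x => τ (Sum.inl x)) + desWord (fun y => τ (Sum.inr y))) * X := by
    intro τ; rw [pow_succ]
  rw [Finset.sum_congr rfl fun τ _ => hrw τ, ← Finset.sum_mul]
  congr 1
  exact sum_equivs a (c + 1)

lemma sum_filter_last (m : ℕ) :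
    ∑ σ ∈ univ.filter (fun σ : Equiv.Perm (Fin (m + 1)) => σ (Fin.last m) = Fin.last m),
      (X : Polynomial ℤ) ^ descentsCount (m + 1) σ = eulerianPoly m := by
  let e2 : Fin m ⊕ Fin 1 ≃ Fin (m + 1) := finSumFinEquiv
  let F : Equiv.Perm (Fin m) → Equiv.Perm (Fin (m + 1)) :=
    fun π => e2.symm.trans ((π.sumCongr (Equiv.refl (Fin 1))).trans e2)
  have hv : ∀ u : Fin m, ((e2 (Sum.inl u) : Fin (m + 1)) : ℕ) = (u : ℕ) := by
    intro u; simp [e2]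
  have hv' : ∀ z : Fin 1, ((e2 (Sum.inr z) : Fin (m + 1)) : ℕ) = m := by
    intro z; simp [e2]
  have hF1 : ∀ π (x : Fin m), F π (e2 (Sum.inl x)) = e2 (Sum.inl (π x)) := by
    intro π x; simp only [F, Equiv.trans_apply, Equiv.symm_apply_apply]; rfl
  have hF2 : ∀ π (z : Fin 1), F π (e2 (Sum.inr z)) = e2 (Sum.inr z) := by
    intro π z; simp only [F, Equiv.trans_apply, Equiv.symm_apply_apply]; rfl
  have hlaste : e2 (Sum.inr (0 : Fin 1)) = Fin.last m := Fin.ext (by rw [hv']; rfl)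
  have hdes : ∀ π, descentsCount (m + 1) (F π) = descentsCount m π := by
    intro π
    rw [descentsCount_eq_desWord, desWord_eq_sum, descentsCount_eq_desWord, desWord_eq_sum]
    rw [← Equiv.sum_comp e2 (fun i : Fin (m + 1) =>
      if (∃ h : (i : ℕ) + 1 < m + 1, (F π) ⟨(i : ℕ) + 1, h⟩ < (F π) i) then 1 else 0)]
    rw [Fintype.sum_sum_type]
    have hT2 : ∑ z : Fin 1,
        (if (∃ h : ((e2 (Sum.inr z) : Fin (m + 1)) : ℕ) + 1 < m + 1,
            (F π) ⟨_ + 1, h⟩ < (F π) (e2 (Sum.inr z))) then 1 else 0) = 0 := by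
      rw [Fin.sum_univ_one]
      rw [if_neg]
      rintro ⟨h, -⟩
      rw [hv'] at h
      omega
    rw [hT2, add_zero]
    refine Finset.sum_congr rfl fun x _ => ?_
    refine if_congr ?_ rfl rfl
    have hb : ((e2 (Sum.inl x) : Fin (m + 1)) : ℕ) + 1 < m + 1 := by
      rw [hv]; have := x.isLt; omega
    rw [exists_iff_of_true hb, hF1]
    rcases lt_or_ge ((x : ℕ) + 1) m with hx | hx
    · have hkey : (⟨((e2 (Sum.inl x) : Fin (m + 1)) : ℕ) + 1, hb⟩ : Fin (m + 1))
          = e2 (Sum.inl ⟨(x : ℕ) + 1, hx⟩) := Fin.ext (by simp [hv])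
      rw [hkey, hF1]
      rw [show (e2 (Sum.inl (π ⟨(x:ℕ)+1, hx⟩)) < e2 (Sum.inl (π x)))
          ↔ (π ⟨(x:ℕ)+1, hx⟩ < π x) by rw [Fin.lt_def, Fin.lt_def, hv, hv]]
      exact (exists_iff_of_true (Q := fun h => π ⟨(x:ℕ)+1, h⟩ < π x) hx).symm
    · have hxm : (x : ℕ) + 1 = m := by have := x.isLt; omega
      have hkey : (⟨((e2 (Sum.inl x) : Fin (m + 1)) : ℕ) + 1, hb⟩ : Fin (m + 1))
          = e2 (Sum.inr 0) := Fin.ext (by simp [hv, hv']; omega)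
      rw [hkey, hF2]
      constructor
      · intro h
        rw [Fin.lt_def, hv, hv'] at h
        have := (π x).isLt
        omega
      · rintro ⟨h, -⟩; omega
  refine (Finset.sum_nbij F ?_ ?_ ?_ ?_).symm
  · intro π _
    rw [Finset.mem_filter]
    refine ⟨mem_univ _, ?_⟩
    rw [← hlaste, hF2]
  · intro π _ π' _ hππ'
    apply Equiv.ext
    intro x
    have := congrArg (fun (f : Equiv.Perm (Fin (m + 1))) => f (e2 (Sum.inl x))) hππ'
    rw [hF1, hF1] at this
    exact Sum.inl_injective (e2.injective this)
  · intro σ hσ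
    rw [Finset.mem_coe, Finset.mem_filter] at hσ
    obtain ⟨-, hσp⟩ := hσ
    have hne : ∀ x : Fin m, σ (e2 (Sum.inl x)) ≠ Fin.last m := by
      intro x hcontra
      rw [← hσp] at hcontra
      have := σ.injective hcontra
      apply_fun Fin.val at this
      rw [hv, Fin.val_last] at this
      have := x.isLt
      omega
    have hginj : Function.Injective
        (fun x : Fin m => (σ (e2 (Sum.inl x))).castPred (hne x)) := by
      intro u v huv
      simp only at huv
      have h1 : σ (e2 (Sum.inl u)) = σ (e2 (Sum.inl v)) :=
        Fin.ext (by have := congrArg Fin.val huv; simpa using this)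
      exact Sum.inl_injective (e2.injective (σ.injective h1))
    have hbij := (Fintype.bijective_iff_injective_and_card _).2 ⟨hginj, by simp⟩
    refine ⟨Equiv.ofBijective _ hbij, by simp, ?_⟩
    apply Equiv.ext
    have key : ∀ z, (F (Equiv.ofBijective _ hbij)) (e2 z) = σ (e2 z) := by
      rintro (x | z)
      · rw [hF1]
        show e2 (Sum.inl ((σ (e2 (Sum.inl x))).castPred (hne x))) = σ (e2 (Sum.inl x))
        exact Fin.ext (by rw [hv]; simp)
      · rw [hF2]
        have hz : z = 0 := Subsingleton.elim _ _
        rw [hz, hlaste, hσp]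
    intro i
    have hkey := key (e2.symm i)
    rwa [e2.apply_symm_apply] at hkey
  · intro π _
    rw [hdes π]

theorem eulerianPoly_recurrence (n : ℕ) (hn : 1 ≤ n) :
    eulerianPoly n = eulerianPoly (n - 1) +
      ∑ k ∈ Finset.Icc 1 (n - 1),
        ((n - 1).choose (k - 1) : Polynomial ℤ) *
          eulerianPoly (k - 1) * eulerianPoly (n - k) * X := by
  obtain ⟨m, rfl⟩ : ∃ m, n = m + 1 := ⟨n - 1, by omega⟩
  simp only [Nat.add_sub_cancel]
  have hEP : eulerianPoly (m + 1)
      = ∑ σ : Equiv.Perm (Fin (m + 1)), X ^ descentsCount (m + 1) σ := rfl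
  rw [hEP]
  rw [← Finset.sum_fiberwise_of_maps_to
    (g := fun σ : Equiv.Perm (Fin (m + 1)) => σ.symm (Fin.last m))
    (t := (univ : Finset (Fin (m + 1)))) (fun σ _ => mem_univ _)]
  have hfil : ∀ p : Fin (m + 1),
      (univ.filter fun σ : Equiv.Perm (Fin (m + 1)) => σ.symm (Fin.last m) = p)
      = univ.filter fun σ => σ p = Fin.last m := by
    intro p
    apply Finset.filter_congr
    intro σ _
    rw [Equiv.symm_apply_eq, eq_comm]
  rw [Finset.sum_congr rfl (fun p _ => by rw [hfil p])]
  rw [Fin.sum_univ_castSucc]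
  rw [sum_filter_last m]
  rw [add_comm]
  congr 1
  refine Finset.sum_nbij (fun p : Fin m => (p : ℕ) + 1) ?_ ?_ ?_ ?_
  · intro p _
    rw [Finset.mem_Icc]
    have := p.isLt
    show 1 ≤ (p : ℕ) + 1 ∧ (p : ℕ) + 1 ≤ m
    omega
  · intro p _ q _ hpq
    simp only at hpq
    exact Fin.ext (by omega)
  · intro k hk
    rw [Finset.mem_coe, Finset.mem_Icc] at hk
    refine ⟨⟨k - 1, by omega⟩, by simp, by simp; omega⟩
  · intro p _
    have hplt := p.isLt
    rw [sum_filter_mid (m + 1) (p : ℕ) (m - (p : ℕ) - 1) (by omega)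
      (Fin.castSucc p) (Fin.last m) (by simp) (by simp)]
    have h1 : (p : ℕ) + (m - (p : ℕ) - 1) + 1 = m := by omega
    have h2 : (m - (p : ℕ) - 1) + 1 = m - (p : ℕ) := by omega
    rw [h1, h2]
    have h3 : (p : ℕ) + 1 - 1 = (p : ℕ) := by omega
    have h4 : m + 1 - ((p : ℕ) + 1) = m - (p : ℕ) := by omega
    rw [h3, h4]
    ring
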